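/- arXiv:1301.0501 — 2 statements merged into one kernel-verified Lean document; each statement's English description precedes it below -/
import Mathlib

section
/- Let μ be a finite Borel measure on the unit circle with Carathéodory function F, and let β ∈ (0,1] and C > 0. Suppose Re F((1-ε)e^{iΘ}) ≤ C·ε^{β-1} for all sufficiently small ε > 0 and all Θ in some closed set S of angles. Then there is a constant C' such that μ of every arc of angular radius ε centered at a point of S is at most C'·ε^β; i.e., μ is uniformly β-Hölder continuous on S. -/
open Complex MeasureTheory

lemma re_div_aux (w z : ℂ) (hw : Complex.normSq w = 1) (_h : w ≠ z) :
    ((w + z) / (w - z)).re = (1 - Complex.normSq z) / Complex.normSq (w - z) := by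
  rw [Complex.div_re, ← add_div]
  congr 1
  simp only [Complex.normSq_apply, Complex.add_re, Complex.add_im, Complex.sub_re,
    Complex.sub_im] at hw ⊢
  linear_combination hw

theorem holder_continuity_from_caratheodory_bound
    (μ : Measure ℝ) [IsFiniteMeasure μ]
    (F : ℂ → ℂ)
    (hF : ∀ z, F z = ∫ θ, (Complex.exp (θ * Complex.I) + z) /
      (Complex.exp (θ * Complex.I) - z) ∂μ)
    (β C : ℝ) (hβ : 0 < β) (hβ1 : β ≤ 1) (hC : 0 < C)
    (S : Set ℝ) (hS : IsClosed S)
    (hbound : ∃ ε₀ > 0, ∀ ε : ℝ, 0 < ε → ε < ε₀ → ∀ Θ ∈ S,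
      (F ((1 - ε) * Complex.exp (Θ * Complex.I))).re ≤ C * ε ^ (β - 1)) :
    ∃ C' > 0, ∃ ε₁ > 0, ∀ ε : ℝ, 0 < ε → ε < ε₁ → ∀ Θ ∈ S,
      (μ {t : ℝ | |t - Θ| ≤ ε}).toReal ≤ C' * ε ^ β := by
  obtain ⟨ε₀, hε₀, hb⟩ := hbound
  refine ⟨2 * C, by positivity, min ε₀ 1, by positivity, ?_⟩
  intro ε hε hε1 Θ hΘ
  have hεε₀ : ε < ε₀ := lt_of_lt_of_le hε1 (min_le_left _ _)
  have hεle1 : ε < 1 := lt_of_lt_of_le hε1 (min_le_right _ _)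
  set r : ℝ := 1 - ε with hr
  have hr0 : 0 < r := by simp only [hr]; linarith
  have hr1 : r < 1 := by simp only [hr]; linarith
  set z : ℂ := (1 - (ε:ℂ)) * Complex.exp ((Θ:ℂ) * Complex.I) with hz
  have hzc : (1 - (ε:ℂ)) = ((r:ℝ) : ℂ) := by push_cast [hr]; ring
  have hzabs : ‖z‖ = r := by
    rw [hz, hzc, norm_mul, Complex.norm_real, Real.norm_eq_abs, Complex.norm_exp_ofReal_mul_I,
      abs_of_pos hr0, mul_one]
  have hznorm : Complex.normSq z = r ^ 2 := by
    rw [Complex.normSq_eq_norm_sq, hzabs]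
  -- the denominator never vanishes
  have hd_lb : ∀ t : ℝ, ε ≤ ‖Complex.exp ((t:ℂ) * Complex.I) - z‖ := by
    intro t
    have h1 : ‖Complex.exp ((t:ℂ) * Complex.I)‖ = 1 :=
      Complex.norm_exp_ofReal_mul_I t
    have := norm_sub_norm_le (Complex.exp ((t:ℂ) * Complex.I)) z
    rw [h1, hzabs] at this
    linarith
  have hne : ∀ t : ℝ, Complex.exp ((t:ℂ) * Complex.I) - z ≠ 0 := by
    intro t h0
    have := hd_lb t
    rw [h0, norm_zero] at this
    linarith
  set f : ℝ → ℂ := fun t => (Complex.exp ((t:ℂ) * Complex.I) + z) /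
    (Complex.exp ((t:ℂ) * Complex.I) - z) with hf_def
  have cont_e : Continuous fun t : ℝ => Complex.exp ((t:ℂ) * Complex.I) :=
    Complex.continuous_exp.comp (Complex.continuous_ofReal.mul continuous_const)
  have cont_f : Continuous f :=
    ((cont_e.add continuous_const).div (cont_e.sub continuous_const) hne)
  have hf_bound : ∀ t : ℝ, ‖f t‖ ≤ 2 / ε := by
    intro t
    have h1 : ‖Complex.exp ((t:ℂ) * Complex.I)‖ = 1 :=
      Complex.norm_exp_ofReal_mul_I t
    have hnum : ‖Complex.exp ((t:ℂ) * Complex.I) + z‖ ≤ 2 := by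
      calc ‖Complex.exp ((t:ℂ) * Complex.I) + z‖
          ≤ ‖Complex.exp ((t:ℂ) * Complex.I)‖ + ‖z‖ :=
            norm_add_le _ _
        _ ≤ 2 := by rw [h1, hzabs]; linarith
    have hden := hd_lb t
    rw [hf_def]
    simp only [norm_div]
    exact div_le_div₀ (by norm_num) hnum hε hden
  have hf_int : Integrable f μ := by
    refine Integrable.mono' (integrable_const (2 / ε)) cont_f.aestronglyMeasurable ?_
    filter_upwards with t using hf_bound t
  -- real part of the integrand: Poisson kernel
  set g : ℝ → ℝ := fun t =>
    (1 - Complex.normSq z) / Complex.normSq (Complex.exp ((t:ℂ) * Complex.I) - z)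
    with hg_def
  have hre : ∀ t : ℝ, (f t).re = g t := by
    intro t
    apply re_div_aux
    · rw [Complex.normSq_eq_norm_sq, Complex.norm_exp_ofReal_mul_I]; norm_num
    · exact sub_ne_zero.mp (hne t)
  have hg_int : Integrable g μ := by
    simpa only [RCLike.re_to_complex, hre] using hf_int.re
  have hg_nonneg : ∀ t : ℝ, 0 ≤ g t := by
    intro t
    apply div_nonneg
    · rw [hznorm]; nlinarith
    · exact Complex.normSq_nonneg _
  -- the integral of g equals Re F z
  have hint_eq : ∫ t, g t ∂μ = (F z).re := by
    rw [hF]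
    have := integral_re (𝕜 := ℂ) hf_int
    simpa only [RCLike.re_to_complex, hre] using this
  -- lower bound for g on the arc
  have hg_lb : ∀ t : ℝ, |t - Θ| ≤ ε → 1 / (2 * ε) ≤ g t := by
    intro t ht
    have hD : Complex.normSq (Complex.exp ((t:ℂ) * Complex.I) - z) ≤ 2 * ε ^ 2 := by
      have hzre : z.re = r * Real.cos Θ := by
        rw [hz, hzc, Complex.re_ofReal_mul, Complex.exp_ofReal_mul_I_re]
      have hzim : z.im = r * Real.sin Θ := by
        rw [hz, hzc, Complex.im_ofReal_mul, Complex.exp_ofReal_mul_I_im]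
      have hcos : Real.cos (t - Θ) = Real.cos t * Real.cos Θ + Real.sin t * Real.sin Θ :=
        Real.cos_sub t Θ
      have hcos_lb : 1 - (t - Θ) ^ 2 / 2 ≤ Real.cos (t - Θ) :=
        Real.one_sub_sq_div_two_le_cos
      have hsq : (t - Θ) ^ 2 ≤ ε ^ 2 := by
        have := abs_nonneg (t - Θ)
        nlinarith [_root_.sq_abs (t - Θ)]
      have hpyt : Real.sin t ^ 2 + Real.cos t ^ 2 = 1 := Real.sin_sq_add_cos_sq t
      have hpytΘ : Real.sin Θ ^ 2 + Real.cos Θ ^ 2 = 1 := Real.sin_sq_add_cos_sq Θ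
      rw [Complex.normSq_apply, Complex.sub_re, Complex.sub_im,
        Complex.exp_ofReal_mul_I_re, Complex.exp_ofReal_mul_I_im, hzre, hzim]
      have hrε : r = 1 - ε := hr
      nlinarith [hcos_lb, hsq, hcos]
    have hD0 : 0 < Complex.normSq (Complex.exp ((t:ℂ) * Complex.I) - z) := by
      have := hd_lb t
      rw [Complex.normSq_eq_norm_sq]
      nlinarith
    have hnum_lb : ε ≤ 1 - Complex.normSq z := by
      rw [hznorm, hr]; nlinarith
    rw [hg_def]
    rw [div_le_div_iff₀ (by positivity) hD0]
    nlinarith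
  -- put everything together
  set A : Set ℝ := {t : ℝ | |t - Θ| ≤ ε} with hA
  have hAm : MeasurableSet A := by
    have : A = Metric.closedBall Θ ε := by
      ext t; simp [hA, Metric.mem_closedBall, Real.dist_eq]
    rw [this]; exact measurableSet_closedBall
  have hμA : (μ A).toReal * (1 / (2 * ε)) ≤ ∫ t, g t ∂μ := by
    calc (μ A).toReal * (1 / (2 * ε)) = ∫ _ in A, 1 / (2 * ε) ∂μ := by
          rw [setIntegral_const]; simp [smul_eq_mul, Measure.real]
      _ ≤ ∫ t in A, g t ∂μ := by
          apply setIntegral_mono_on ((integrableOn_const_iff).mpr (Or.inr (measure_lt_top μ A)))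
            hg_int.integrableOn hAm
          intro t ht
          exact hg_lb t ht
      _ ≤ ∫ t, g t ∂μ := by
          apply setIntegral_le_integral hg_int
          filter_upwards with t using hg_nonneg t
  have hFb : (F z).re ≤ C * ε ^ (β - 1) := hb ε hε hεε₀ Θ hΘ
  have key : (μ A).toReal * (1 / (2 * ε)) ≤ C * ε ^ (β - 1) := by
    rw [hint_eq] at hμA
    linarith
  have hpow : ε ^ (β - 1) * ε = ε ^ β := by
    have h := (Real.rpow_add hε (β - 1) 1).symm
    simpa using h
  have h2ε : (0 : ℝ) < 2 * ε := by positivity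
  calc (μ A).toReal = (μ A).toReal * (1 / (2 * ε)) * (2 * ε) := by field_simp
    _ ≤ C * ε ^ (β - 1) * (2 * ε) := mul_le_mul_of_nonneg_right key h2ε.le
    _ = 2 * C * ε ^ β := by rw [← hpow]; ring
end

section
/- Let γ₁, γ₂ > 0 with γ₁ ≤ γ₂ and β = 2γ₁/(γ₁+γ₂). Suppose φ, ψ : [1,∞) → (0,∞) satisfy the two-sided power-law bounds C₁L^{γ₁} ≤ φ(L), ψ(L) ≤ C₂L^{γ₂}, and suppose x(r) ≥ 1 is defined for r ∈ (0,1) by the relation (1-r)·φ(x(r))·ψ(x(r)) = √2. Then there is a constant C₃ such that ψ(x(r))/φ(x(r)) ≤ C₃ (1-r)^{β-1} for all r close enough to 1. -/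
theorem jitomirskaya_last_ratio_bound
    (γ₁ γ₂ : ℝ) (hγ₁ : 0 < γ₁) (hγ₂ : 0 < γ₂) (hγ : γ₁ ≤ γ₂)
    (β : ℝ) (hβ : β = 2 * γ₁ / (γ₁ + γ₂))
    (φ ψ : ℝ → ℝ) (C₁ C₂ : ℝ) (hC₁ : 0 < C₁) (hC₂ : 0 < C₂)
    (hφ : ∀ L ≥ (1 : ℝ), C₁ * L ^ γ₁ ≤ φ L ∧ φ L ≤ C₂ * L ^ γ₂)
    (hψ : ∀ L ≥ (1 : ℝ), C₁ * L ^ γ₁ ≤ ψ L ∧ ψ L ≤ C₂ * L ^ γ₂)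
    (x : ℝ → ℝ) (hx1 : ∀ r ∈ Set.Ioo (0 : ℝ) 1, 1 ≤ x r)
    (hxr : ∀ r ∈ Set.Ioo (0 : ℝ) 1,
      (1 - r) * φ (x r) * ψ (x r) = Real.sqrt 2) :
    ∃ C₃ > 0, ∃ r₀ ∈ Set.Ioo (0 : ℝ) 1, ∀ r, r₀ < r → r < 1 →
      ψ (x r) / φ (x r) ≤ C₃ * (1 - r) ^ (β - 1) := by
  have hs2 : (0:ℝ) < Real.sqrt 2 := by positivity
  have hsum : 0 < γ₁ + γ₂ := by linarith
  set θ : ℝ := γ₂ / (γ₁ + γ₂) with hθdef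
  have hθ0 : 0 < θ := by positivity
  have hθ1 : θ ≤ 1 := by rw [hθdef, div_le_one hsum]; linarith
  refine ⟨(Real.sqrt 2 / C₁^2)^θ * (C₂^2 / Real.sqrt 2)^(1-θ), by positivity,
    1/2, by norm_num, ?_⟩
  intro r hr0 hr1
  have hr : r ∈ Set.Ioo (0:ℝ) 1 := ⟨by linarith, hr1⟩
  set s := 1 - r with hsdef
  have hs0 : 0 < s := by simp [hsdef]; linarith
  set X := x r with hXdef
  have hX1 : 1 ≤ X := hx1 r hr
  have hX0 : 0 < X := lt_of_lt_of_le one_pos hX1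
  obtain ⟨hφl, hφu⟩ := hφ X hX1
  obtain ⟨hψl, hψu⟩ := hψ X hX1
  have hF0 : 0 < φ X := lt_of_lt_of_le (by positivity) hφl
  have hG0 : 0 < ψ X := lt_of_lt_of_le (by positivity) hψl
  have heq : s * φ X * ψ X = Real.sqrt 2 := hxr r hr
  have hP0 : 0 < ψ X / φ X := div_pos hG0 hF0
  have hsq : ∀ a : ℝ, X ^ (2*a) = (X^a)^2 := by
    intro a
    rw [show 2*a = a*2 by ring, Real.rpow_mul hX0.le]
    norm_num
  -- bound A
  have hA : ψ X / φ X ≤ Real.sqrt 2 / C₁^2 * s⁻¹ * X^(-(2*γ₁)) := by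
    have h1 : ψ X / φ X = Real.sqrt 2 / (s * (φ X)^2) := by
      rw [← heq]; field_simp
    have h2 : Real.sqrt 2 / (s * (φ X)^2) ≤ Real.sqrt 2 / (s * (C₁ * X^γ₁)^2) := by
      gcongr
    have h3 : Real.sqrt 2 / (s * (C₁ * X^γ₁)^2) = Real.sqrt 2 / C₁^2 * s⁻¹ * X^(-(2*γ₁)) := by
      rw [Real.rpow_neg hX0.le, hsq]
      field_simp
    rw [h1, ← h3]; exact h2
  -- bound B
  have hB : ψ X / φ X ≤ C₂^2 / Real.sqrt 2 * s * X^(2*γ₂) := by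
    have h1 : ψ X / φ X = s * (ψ X)^2 / Real.sqrt 2 := by
      rw [← heq]; field_simp
    have h2 : s * (ψ X)^2 / Real.sqrt 2 ≤ s * (C₂ * X^γ₂)^2 / Real.sqrt 2 := by
      gcongr
    have h3 : s * (C₂ * X^γ₂)^2 / Real.sqrt 2 = C₂^2 / Real.sqrt 2 * s * X^(2*γ₂) := by
      rw [hsq]; ring
    rw [h1, ← h3]; exact h2
  have hA0 : (0:ℝ) ≤ Real.sqrt 2 / C₁^2 * s⁻¹ * X^(-(2*γ₁)) := by positivity
  have hB0 : (0:ℝ) ≤ C₂^2 / Real.sqrt 2 * s * X^(2*γ₂) := by positivity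
  have key : ψ X / φ X ≤
      (Real.sqrt 2 / C₁^2 * s⁻¹ * X^(-(2*γ₁)))^θ * (C₂^2 / Real.sqrt 2 * s * X^(2*γ₂))^(1-θ) := by
    calc ψ X / φ X = (ψ X / φ X)^θ * (ψ X / φ X)^(1-θ) := by
          rw [← Real.rpow_add hP0]; norm_num
      _ ≤ _ := by
          apply mul_le_mul (Real.rpow_le_rpow hP0.le hA hθ0.le)
            (Real.rpow_le_rpow hP0.le hB (by linarith))
            (Real.rpow_nonneg hP0.le _) (Real.rpow_nonneg hA0 _)
  have e1 : -(2*γ₁)*θ + 2*γ₂*(1-θ) = 0 := by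
    rw [hθdef]; field_simp; ring
  have e2 : -θ + (1-θ) = β - 1 := by
    rw [hβ, hθdef]; field_simp; ring
  have expand : (Real.sqrt 2 / C₁^2 * s⁻¹ * X^(-(2*γ₁)))^θ * (C₂^2 / Real.sqrt 2 * s * X^(2*γ₂))^(1-θ)
      = (Real.sqrt 2 / C₁^2)^θ * (C₂^2 / Real.sqrt 2)^(1-θ) * s^(β-1) := by
    rw [Real.mul_rpow (by positivity) (by positivity),
        Real.mul_rpow (by positivity) (by positivity),
        Real.mul_rpow (by positivity) (by positivity),
        Real.mul_rpow (by positivity) (by positivity),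
        ← Real.rpow_mul hX0.le, ← Real.rpow_mul hX0.le,
        Real.inv_rpow hs0.le, ← Real.rpow_neg hs0.le]
    calc (Real.sqrt 2 / C₁^2)^θ * s^(-θ) * X^(-(2*γ₁)*θ) *
          ((C₂^2 / Real.sqrt 2)^(1-θ) * s^(1-θ) * X^(2*γ₂*(1-θ)))
        = (Real.sqrt 2 / C₁^2)^θ * (C₂^2 / Real.sqrt 2)^(1-θ) *
          (s^(-θ) * s^(1-θ)) * (X^(-(2*γ₁)*θ) * X^(2*γ₂*(1-θ))) := by ring
      _ = (Real.sqrt 2 / C₁^2)^θ * (C₂^2 / Real.sqrt 2)^(1-θ) * s^(β-1) := by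
          rw [← Real.rpow_add hs0, ← Real.rpow_add hX0, e1, e2, Real.rpow_zero, mul_one]
  calc ψ X / φ X ≤ _ := key
    _ = _ := expand
end
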